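/- Let O be a commutative, reduced, finite, flat Z-algebra and N a finitely generated O-module. Fix y ∈ N not lying in the Z-torsion submodule of N, and let φ : O → O·y be the O-linear surjection sending 1 to y. Then there exists a positive integer m and an O-linear map ψ : O·y → O such that φ ∘ ψ : O·y → O·y is multiplication by m. -/

import Mathlib

open scoped TensorProduct

section Key

variable (O : Type) [CommRing O] [IsReduced O] [Module.Finite ℤ O] [Module.Flat ℤ O]

noncomputable abbrev AA := ℚ ⊗[ℤ] O

noncomputable abbrev φmap : O →ₐ[ℤ] AA O := Algebra.TensorProduct.includeRight

lemma phi_inj : Function.Injective (φmap O) := by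
  have hf : Function.Injective (Algebra.linearMap ℤ ℚ) := by
    intro a b h
    simpa using h
  have h1 := Module.Flat.rTensor_preserves_injective_linearMap (M := O)
    (Algebra.linearMap ℤ ℚ) hf
  have hcomp : ∀ x : O,
      ((Algebra.linearMap ℤ ℚ).rTensor O) ((TensorProduct.lid ℤ O).symm x) = φmap O x := by
    intro x
    simp [TensorProduct.lid_symm_apply, LinearMap.rTensor_tmul]
  intro a b hab
  apply (TensorProduct.lid ℤ O).symm.injective
  apply h1
  rw [hcomp a, hcomp b]
  exact hab

lemma clear_denom (x : AA O) : ∃ n : ℕ, 0 < n ∧ ∃ o : O, (n : ℤ) • x = φmap O o := by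
  induction x using TensorProduct.induction_on with
  | zero => exact ⟨1, one_pos, 0, by simp⟩
  | tmul q o =>
      refine ⟨q.den, q.pos, q.num • o, ?_⟩
      have hden : ((q.den : ℚ)) ≠ 0 := by
        exact_mod_cast q.den_nz
      have hq0 : (q.num : ℚ) = q * q.den := (div_eq_iff hden).mp (Rat.num_div_den q)
      have hzq : (q.den : ℤ) • q = ((q.num : ℤ) : ℚ) := by
        rw [← Int.cast_smul_eq_zsmul ℚ]
        push_cast
        rw [smul_eq_mul, mul_comm, ← hq0]
      have h2 : ((q.num : ℤ) : ℚ) = (q.num : ℤ) • (1 : ℚ) := by simp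
      rw [TensorProduct.smul_tmul', hzq, h2, TensorProduct.smul_tmul]
      rfl
  | add x y hx hy =>
      obtain ⟨n1, h1, o1, e1⟩ := hx
      obtain ⟨n2, h2, o2, e2⟩ := hy
      refine ⟨n1 * n2, Nat.mul_pos h1 h2, (n2 : ℤ) • o1 + (n1 : ℤ) • o2, ?_⟩
      have : ((n1 * n2 : ℕ) : ℤ) • (x + y) = (n2 : ℤ) • ((n1 : ℤ) • x) + (n1 : ℤ) • ((n2 : ℤ) • y) := by
        rw [smul_add, smul_smul, smul_smul]
        push_cast
        ring_nf
      rw [this, e1, e2, map_add, map_zsmul, map_zsmul]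

lemma AA_reduced : IsReduced (AA O) := by
  refine ⟨fun x hx => ?_⟩
  obtain ⟨k, hk⟩ := hx
  obtain ⟨n, hn, o, ho⟩ := clear_denom O x
  have hok : φmap O (o ^ k) = 0 := by
    rw [map_pow, ← ho, smul_pow, hk, smul_zero]
  have ho0 : o = 0 := by
    have : o ^ k = 0 := phi_inj O (by rw [hok, map_zero])
    exact IsNilpotent.eq_zero ⟨k, this⟩
  have hnx : (n : ℤ) • x = 0 := by rw [ho, ho0, map_zero]
  have hq : ((n : ℤ) : ℚ) • x = 0 := by rw [Int.cast_smul_eq_zsmul]; exact hnx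
  have hne : ((n : ℤ) : ℚ) ≠ 0 := by exact_mod_cast hn.ne'
  exact (smul_eq_zero.mp hq).resolve_left hne

lemma key (I : Ideal O) :
    ∃ n : ℕ, 0 < n ∧ ∃ e b : O, b ∈ I ∧ (∀ a ∈ I, e * a = 0) ∧
      (n : ℤ) • (1 : O) = b + e := by
  letI : IsReduced (AA O) := AA_reduced O
  letI : IsArtinianRing (AA O) := IsArtinianRing.of_finite ℚ (AA O)
  letI : IsSemisimpleRing (AA O) := IsArtinianRing.isSemisimpleRing_of_isReduced (AA O)
  set IA : Ideal (AA O) := Ideal.span ((φmap O) '' I) with hIA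
  obtain ⟨J, hJ⟩ := exists_isCompl IA
  have h1 : (1 : AA O) ∈ IA ⊔ J := by rw [hJ.sup_eq_top]; trivial
  obtain ⟨i, hi, j, hjJ, hij⟩ := Submodule.mem_sup.mp h1
  have hjann : ∀ a ∈ IA, j * a = 0 := by
    intro a ha
    have hmem : j * a ∈ IA ⊓ J :=
      ⟨Ideal.mul_mem_left IA j ha, Ideal.mul_mem_right a J hjJ⟩
    rw [hJ.inf_eq_bot] at hmem
    simpa using hmem
  have pull : ∀ x ∈ IA, ∃ n : ℕ, 0 < n ∧ ∃ b ∈ I, (n : ℤ) • x = φmap O b := by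
    intro x hx
    refine Submodule.span_induction ?_ ?_ ?_ ?_ hx
    · rintro _ ⟨a, ha, rfl⟩
      exact ⟨1, one_pos, a, ha, by simp⟩
    · exact ⟨1, one_pos, 0, I.zero_mem, by simp⟩
    · rintro x y - - ⟨n1, h1, b1, hb1, e1⟩ ⟨n2, h2, b2, hb2, e2⟩
      refine ⟨n1 * n2, Nat.mul_pos h1 h2,
        (n2 : ℤ) • b1 + (n1 : ℤ) • b2,
        I.toAddSubgroup.add_mem (I.toAddSubgroup.zsmul_mem hb1 _) (I.toAddSubgroup.zsmul_mem hb2 _), ?_⟩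
      have : ((n1 * n2 : ℕ) : ℤ) • (x + y)
          = (n2 : ℤ) • ((n1 : ℤ) • x) + (n1 : ℤ) • ((n2 : ℤ) • y) := by
        rw [smul_add, smul_smul, smul_smul]; push_cast; ring_nf
      rw [this, e1, e2, map_add, map_zsmul, map_zsmul]
    · rintro c x - ⟨n1, h1, b1, hb1, e1⟩
      obtain ⟨n2, h2, o2, e2⟩ := clear_denom O c
      refine ⟨n2 * n1, Nat.mul_pos h2 h1, o2 * b1, I.mul_mem_left o2 hb1, ?_⟩
      have : ((n2 * n1 : ℕ) : ℤ) • (c • x) = ((n2 : ℤ) • c) * ((n1 : ℤ) • x) := by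
        rw [smul_eq_mul, smul_mul_smul_comm]
        push_cast
        rw [mul_smul]
      rw [this, e1, e2, ← map_mul]
  obtain ⟨n1, hn1, b, hbI, hb⟩ := pull i hi
  obtain ⟨n2, hn2, o2, ho2⟩ := clear_denom O j
  refine ⟨n1 * n2, Nat.mul_pos hn1 hn2, (n1 : ℤ) • o2, (n2 : ℤ) • b,
    I.toAddSubgroup.zsmul_mem hbI _, ?_, ?_⟩
  · intro a ha
    apply phi_inj O
    have hja : j * φmap O a = 0 :=
      hjann _ (Ideal.subset_span ⟨a, ha, rfl⟩)
    rw [map_mul, map_zero, map_zsmul, ← ho2]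
    rw [smul_mul_assoc, smul_mul_assoc, hja, smul_zero, smul_zero]
  · apply phi_inj O
    rw [map_zsmul, map_one, map_add, map_zsmul, map_zsmul, ← hb, ← ho2]
    rw [← hij, smul_add]
    congr 1 <;> rw [smul_smul] <;> congr 1 <;> push_cast <;> try ring

end Key

theorem stmt5
    (O : Type) [CommRing O] [IsReduced O] [Module.Finite ℤ O] [Module.Flat ℤ O]
    (N : Type) [AddCommGroup N] [Module O N] [Module.Finite O N]
    (y : N) (hy : ∀ k : ℤ, k ≠ 0 → k • y ≠ 0) :
    ∃ m : ℕ, 0 < m ∧ ∃ ψ : ↥(Submodule.span O {y}) →ₗ[O] O,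
      ∀ z : ↥(Submodule.span O {y}), ψ z • y = (m : ℤ) • (z : N) := by
  classical
  set I : Ideal O := LinearMap.ker (LinearMap.toSpanSingleton O N y) with hI
  obtain ⟨n, hn, e, b, hb, he, hsum⟩ := key O I
  choose g hg using fun z : Submodule.span O {y} => Submodule.mem_span_singleton.mp z.2
  have hker : ∀ a : O, a • y = 0 → a * e = 0 := fun a ha => by
    rw [mul_comm]; exact he a (by simpa [hI, LinearMap.mem_ker] using ha)
  refine ⟨n, hn, ⟨⟨⟨fun z => g z * e, ?_⟩, ?_⟩, ?_⟩⟩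
  · intro z w
    have h : (g (z + w) - g z - g w) • y = 0 := by
      have := hg z; have := hg w; have := hg (z + w)
      simp only [sub_smul, *, Submodule.coe_add]
      abel
    have := hker _ h
    linear_combination this
  · intro c z
    have h : (g (c • z) - c * g z) • y = 0 := by
      have h1 := hg z; have h2 := hg (c • z)
      rw [sub_smul, mul_smul, h1, h2]
      simp
    have := hker _ h
    simp only [RingHom.id_apply, smul_eq_mul]
    linear_combination this
  · intro z
    have hb' : b • y = 0 := by simpa [hI, LinearMap.mem_ker] using hb
    have hey : e • y = (n : ℤ) • y := by
      have heq : e = (n : ℤ) • (1 : O) - b := by rw [hsum]; ring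
      rw [heq, sub_smul, smul_assoc, one_smul, hb', sub_zero]
    show (g z * e) • y = _
    calc (g z * e) • y = g z • e • y := by rw [mul_smul]
    _ = g z • ((n:ℤ) • y) := by rw [hey]
    _ = (n:ℤ) • (g z • y) := smul_comm _ _ _
    _ = (n:ℤ) • (z : N) := by rw [hg z]
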